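/- Let S = K[x_1,...,x_6] and let g : S(−2)^6 → Λ²S^6 be the map sending generators m_1,...,m_6 to e_{12}, e_{13}, e_{23}, e_{45}, e_{46}, e_{56} respectively. Then the kernel of the composite ∂_2 ∘ g : S(−2)^6 → S^6 is the free submodule generated by the two elements x_3 m_1 − x_2 m_2 + x_1 m_3 and x_6 m_4 − x_5 m_5 + x_4 m_6, and this kernel is free of rank 2. -/

import Mathlib

open MvPolynomial

noncomputable section

def sgl (K : Type) [Field K] (i : Fin 6) (x : MvPolynomial (Fin 6) K) :
    Fin 6 → MvPolynomial (Fin 6) K :=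
  Pi.single i x

def exImages (K : Type) [Field K] : Fin 6 → (Fin 6 → MvPolynomial (Fin 6) K) :=
  ![sgl K 1 (X 0) - sgl K 0 (X 1),
    sgl K 2 (X 0) - sgl K 0 (X 2),
    sgl K 2 (X 1) - sgl K 1 (X 2),
    sgl K 4 (X 3) - sgl K 3 (X 4),
    sgl K 5 (X 3) - sgl K 3 (X 5),
    sgl K 5 (X 4) - sgl K 4 (X 5)]

def exComposite (K : Type) [Field K] :
    (Fin 6 → MvPolynomial (Fin 6) K) →ₗ[MvPolynomial (Fin 6) K]
      (Fin 6 → MvPolynomial (Fin 6) K) :=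
  ∑ k : Fin 6, (LinearMap.proj k).smulRight (exImages K k)

/-! ### Auxiliary lemmas -/

lemma vec6_zero {α : Type*} (a b c d e f : α) : ![a,b,c,d,e,f] (0 : Fin 6) = a := rfl
lemma vec6_one {α : Type*} (a b c d e f : α) : ![a,b,c,d,e,f] (1 : Fin 6) = b := rfl
lemma vec6_two {α : Type*} (a b c d e f : α) : ![a,b,c,d,e,f] (2 : Fin 6) = c := rfl
lemma vec6_three {α : Type*} (a b c d e f : α) : ![a,b,c,d,e,f] (3 : Fin 6) = d := rfl
lemma vec6_four {α : Type*} (a b c d e f : α) : ![a,b,c,d,e,f] (4 : Fin 6) = e := rfl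
lemma vec6_five {α : Type*} (a b c d e f : α) : ![a,b,c,d,e,f] (5 : Fin 6) = f := rfl


lemma funext6 {α : Type*} {f g : Fin 6 → α} (h0 : f 0 = g 0) (h1 : f 1 = g 1)
    (h2 : f 2 = g 2) (h3 : f 3 = g 3) (h4 : f 4 = g 4) (h5 : f 5 = g 5) : f = g := by
  funext j
  fin_cases j
  exacts [h0, h1, h2, h3, h4, h5]

lemma prime_X_mv (K : Type) [Field K] {n : ℕ} (i : Fin (n+1)) :
    Prime (X i : MvPolynomial (Fin (n+1)) K) := by
  rw [← MulEquiv.prime_iff ((renameEquiv K (Equiv.swap i 0)).trans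
      (finSuccEquiv K n)).toRingEquiv.toMulEquiv]
  have h : ((renameEquiv K (Equiv.swap i 0)).trans
      (finSuccEquiv K n)).toRingEquiv.toMulEquiv (X i) = Polynomial.X := by
    simp [finSuccEquiv_X_zero]
  rw [h]
  exact Polynomial.prime_X


lemma exImages0 (K : Type) [Field K] : exImages K 0 = sgl K 1 (X 0) - sgl K 0 (X 1) := rfl
lemma exImages1 (K : Type) [Field K] : exImages K 1 = sgl K 2 (X 0) - sgl K 0 (X 2) := rfl
lemma exImages2 (K : Type) [Field K] : exImages K 2 = sgl K 2 (X 1) - sgl K 1 (X 2) := rfl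
lemma exImages3 (K : Type) [Field K] : exImages K 3 = sgl K 4 (X 3) - sgl K 3 (X 4) := rfl
lemma exImages4 (K : Type) [Field K] : exImages K 4 = sgl K 5 (X 3) - sgl K 3 (X 5) := rfl
lemma exImages5 (K : Type) [Field K] : exImages K 5 = sgl K 5 (X 4) - sgl K 4 (X 5) := rfl

lemma coordEq (K : Type) [Field K] (a : Fin 6 → MvPolynomial (Fin 6) K) (j : Fin 6) :
    exComposite K a j = ∑ k : Fin 6, a k * exImages K k j := by
  simp [exComposite]

/-- first generator -/
def gen1 (K : Type) [Field K] : Fin 6 → MvPolynomial (Fin 6) K :=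
  sgl K 0 (X 2) - sgl K 1 (X 1) + sgl K 2 (X 0)

/-- second generator -/
def gen2 (K : Type) [Field K] : Fin 6 → MvPolynomial (Fin 6) K :=
  sgl K 3 (X 5) - sgl K 4 (X 4) + sgl K 5 (X 3)

lemma gen1_eq (K : Type) [Field K] :
    gen1 K = ![X 2, -X 1, X 0, 0, 0, 0] := by
  apply funext6 <;>
    simp (config := { decide := true }) [gen1, sgl, Pi.single_apply,
      vec6_zero, vec6_one, vec6_two, vec6_three, vec6_four, vec6_five]

lemma gen2_eq (K : Type) [Field K] :
    gen2 K = ![0, 0, 0, X 5, -X 4, X 3] := by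
  apply funext6 <;>
    simp (config := { decide := true }) [gen2, sgl, Pi.single_apply,
      vec6_zero, vec6_one, vec6_two, vec6_three, vec6_four, vec6_five]

lemma gen1_mem (K : Type) [Field K] : gen1 K ∈ LinearMap.ker (exComposite K) := by
  rw [LinearMap.mem_ker]
  rw [show (0 : Fin 6 → MvPolynomial (Fin 6) K) = fun _ => 0 from rfl] at *
  apply funext6 <;>
    · rw [coordEq, gen1_eq]
      simp (config := { decide := true }) [Fin.sum_univ_six, exImages0, exImages1, exImages2,
        exImages3, exImages4, exImages5, sgl, Pi.single_apply,
        vec6_zero, vec6_one, vec6_two, vec6_three, vec6_four, vec6_five]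
      try ring

lemma gen2_mem (K : Type) [Field K] : gen2 K ∈ LinearMap.ker (exComposite K) := by
  rw [LinearMap.mem_ker]
  rw [show (0 : Fin 6 → MvPolynomial (Fin 6) K) = fun _ => 0 from rfl] at *
  apply funext6 <;>
    · rw [coordEq, gen2_eq]
      simp (config := { decide := true }) [Fin.sum_univ_six, exImages0, exImages1, exImages2,
        exImages3, exImages4, exImages5, sgl, Pi.single_apply,
        vec6_zero, vec6_one, vec6_two, vec6_three, vec6_four, vec6_five]
      try ring

lemma ker_le_span (K : Type) [Field K] :
    LinearMap.ker (exComposite K) ≤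
      Submodule.span (MvPolynomial (Fin 6) K) {gen1 K, gen2 K} := by
  intro a ha
  rw [LinearMap.mem_ker] at ha
  have E : ∀ j : Fin 6, ∑ k : Fin 6, a k * exImages K k j = 0 := fun j => by
    rw [← coordEq, ha]; rfl
  have E0 := E 0; have E1 := E 1; have E2 := E 2
  have E3 := E 3; have E4 := E 4; have E5 := E 5
  simp (config := { decide := true }) only [Fin.sum_univ_six, exImages0, exImages1, exImages2,
    exImages3, exImages4, exImages5, sgl, Pi.single_apply,
    vec6_zero, vec6_one, vec6_two, vec6_three, vec6_four, vec6_five, Pi.sub_apply,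
    if_true, if_false, mul_zero, zero_sub, sub_zero, mul_neg, add_zero, zero_add,
    ite_true, ite_false] at E0 E1 E2 E3 E4 E5
  -- E1 : a 0 * X 0 - a 2 * X 2 = 0  (or similar)
  have hX2 : Prime (X 2 : MvPolynomial (Fin 6) K) := prime_X_mv K 2
  have hX5 : Prime (X 5 : MvPolynomial (Fin 6) K) := prime_X_mv K 5
  have hd2 : (X 2 : MvPolynomial (Fin 6) K) ∣ a 0 := by
    rcases hX2.2.2 (a 0) (X 0) ⟨a 2, by linear_combination E1⟩ with h | h
    · exact h
    · exact absurd (X_dvd_X.mp h) (by decide)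
  have hd5 : (X 5 : MvPolynomial (Fin 6) K) ∣ a 3 := by
    rcases hX5.2.2 (a 3) (X 3) ⟨a 5, by linear_combination E4⟩ with h | h
    · exact h
    · exact absurd (X_dvd_X.mp h) (by decide)
  obtain ⟨p, hp⟩ := hd2
  obtain ⟨q, hq⟩ := hd5
  have hX2ne : (X 2 : MvPolynomial (Fin 6) K) ≠ 0 := X_ne_zero 2
  have hX5ne : (X 5 : MvPolynomial (Fin 6) K) ≠ 0 := X_ne_zero 5
  have ha2 : a 2 = p * X 0 := by
    apply mul_right_cancel₀ hX2ne
    linear_combination -E1 + X 0 * hp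
  have ha1 : a 1 = -(p * X 1) := by
    apply mul_right_cancel₀ hX2ne
    linear_combination -E0 - X 1 * hp
  have ha5 : a 5 = q * X 3 := by
    apply mul_right_cancel₀ hX5ne
    linear_combination -E4 + X 3 * hq
  have ha4 : a 4 = -(q * X 4) := by
    apply mul_right_cancel₀ hX5ne
    linear_combination -E3 - X 4 * hq
  rw [Submodule.mem_span_pair]
  refine ⟨p, q, ?_⟩
  apply funext6 <;>
    · rw [gen1_eq, gen2_eq]
      simp (config := { decide := true }) [vec6_zero, vec6_one, vec6_two, vec6_three,
      vec6_four, vec6_five, hp, hq, ha1, ha2, ha4, ha5, mul_comm]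

lemma ker_eq_span (K : Type) [Field K] :
    LinearMap.ker (exComposite K) =
      Submodule.span (MvPolynomial (Fin 6) K) {gen1 K, gen2 K} := by
  refine le_antisymm (ker_le_span K) ?_
  rw [Submodule.span_le]
  rintro x (rfl | rfl)
  · exact gen1_mem K
  · exact gen2_mem K

lemma gens_li (K : Type) [Field K] :
    LinearIndependent (MvPolynomial (Fin 6) K) ![gen1 K, gen2 K] := by
  rw [LinearIndependent.pair_iff]
  intro s t hst
  have h0 := congrFun hst 0
  have h3 := congrFun hst 3
  rw [gen1_eq, gen2_eq] at h0 h3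
  simp [vec6_zero, vec6_three] at h0 h3
  exact ⟨h0, h3⟩

theorem stmt_15 (K : Type) [Field K] :
    LinearMap.ker (exComposite K) =
        Submodule.span (MvPolynomial (Fin 6) K)
          {sgl K 0 (X 2) - sgl K 1 (X 1) + sgl K 2 (X 0),
            sgl K 3 (X 5) - sgl K 4 (X 4) + sgl K 5 (X 3)} ∧
      Module.Free (MvPolynomial (Fin 6) K) (LinearMap.ker (exComposite K)) ∧
      Module.rank (MvPolynomial (Fin 6) K) (LinearMap.ker (exComposite K)) = 2 := by
  have hker : LinearMap.ker (exComposite K) =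
      Submodule.span (MvPolynomial (Fin 6) K) {gen1 K, gen2 K} := ker_eq_span K
  have hrange : Set.range ![gen1 K, gen2 K] = {gen1 K, gen2 K} := by
    simp [Matrix.range_cons, Matrix.range_empty, Set.pair_comm]
  have hspan : LinearMap.ker (exComposite K) =
      Submodule.span (MvPolynomial (Fin 6) K) (Set.range ![gen1 K, gen2 K]) := by
    rw [hker, hrange]
  have b : Module.Basis (Fin 2) (MvPolynomial (Fin 6) K) (LinearMap.ker (exComposite K)) :=
    (Module.Basis.span (gens_li K)).map (LinearEquiv.ofEq _ _ hspan.symm)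
  refine ⟨hker, Module.Free.of_basis b, ?_⟩
  rw [rank_eq_card_basis b]
  simp

end
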